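/- Let d > 2 be an integer, B > 0, A = −((d−2)/2)√(B/(d−1)), r₀ = (B/(d−1))^(1/4), m an integer. The function u₁(r) = (r² − r₀²)^((1−d−dm)/(2d)) · (r² + (d−1)r₀²)^(−(1−d−dm)/(2d) − d(1+2m)/4) satisfies, for r > r₀, the ODE u₁'(r) = (A·r − d(m + 1/2)·r³)/(r⁴ − 2A·r² − B) · u₁(r). -/

import Mathlib

theorem radial_ode_u1 (d : ℤ) (hd : d > 2) (B : ℝ) (hB : B > 0)
    (A r₀ : ℝ) (m : ℤ) (u₁ : ℝ → ℝ)
    (hA : A = -((d - 2 : ℝ) / 2) * Real.sqrt (B / (d - 1)))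
    (hr₀ : r₀ = (B / (d - 1)) ^ ((1 : ℝ) / 4))
    (hu : ∀ r : ℝ, u₁ r =
      (r ^ 2 - r₀ ^ 2) ^ ((1 - (d : ℝ) - d * m) / (2 * d)) *
      (r ^ 2 + ((d : ℝ) - 1) * r₀ ^ 2) ^
        (-((1 - (d : ℝ) - d * m) / (2 * d)) - (d : ℝ) * (1 + 2 * m) / 4)) :
    ∀ r : ℝ, r > r₀ →
      deriv u₁ r =
        (A * r - (d : ℝ) * ((m : ℝ) + 1 / 2) * r ^ 3) / (r ^ 4 - 2 * A * r ^ 2 - B) * u₁ r := by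
  have hd3 : (3 : ℝ) ≤ (d : ℝ) := by exact_mod_cast hd
  have hd1 : (d : ℝ) - 1 > 0 := by linarith
  have hdne : (d : ℝ) ≠ 0 := by linarith
  set x : ℝ := B / ((d : ℝ) - 1) with hxdef
  have hx : x > 0 := div_pos hB hd1
  have hr₀pos : r₀ > 0 := by
    rw [hr₀]; exact Real.rpow_pos_of_pos hx _
  have hs2 : r₀ ^ 2 = Real.sqrt x := by
    rw [hr₀, ← Real.rpow_natCast (x ^ ((1:ℝ)/4)) 2, ← Real.rpow_mul hx.le]
    norm_num [Real.sqrt_eq_rpow]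
  have hspos : r₀ ^ 2 > 0 := pow_pos hr₀pos 2
  have hs4 : ((d:ℝ) - 1) * (r₀ ^ 2) ^ 2 = B := by
    rw [hs2, Real.sq_sqrt hx.le, hxdef]
    field_simp
  have hAs : A = -((d - 2 : ℝ) / 2) * r₀ ^ 2 := by rw [hA, hs2]
  set α : ℝ := (1 - (d : ℝ) - d * m) / (2 * d) with hα
  set β : ℝ := -α - (d : ℝ) * (1 + 2 * m) / 4 with hβ
  intro r hr
  have hrpos : r > 0 := lt_trans hr₀pos hr
  have hP : r ^ 2 - r₀ ^ 2 > 0 := by nlinarith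
  have hQ : r ^ 2 + ((d:ℝ) - 1) * r₀ ^ 2 > 0 := by positivity
  have hu' : u₁ = fun r : ℝ => (r ^ 2 - r₀ ^ 2) ^ α * (r ^ 2 + ((d:ℝ) - 1) * r₀ ^ 2) ^ β :=
    funext hu
  have hdP : HasDerivAt (fun r : ℝ => r ^ 2 - r₀ ^ 2) (2 * r) r := by
    simpa using (hasDerivAt_pow 2 r).sub_const (r₀ ^ 2)
  have hdQ : HasDerivAt (fun r : ℝ => r ^ 2 + ((d:ℝ) - 1) * r₀ ^ 2) (2 * r) r := by
    simpa using (hasDerivAt_pow 2 r).add_const (((d:ℝ) - 1) * r₀ ^ 2)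
  have h1 := hdP.rpow_const (p := α) (Or.inl hP.ne')
  have h2 := hdQ.rpow_const (p := β) (Or.inl hQ.ne')
  have hD : HasDerivAt (fun y : ℝ => (y ^ 2 - r₀ ^ 2) ^ α * (y ^ 2 + ((d:ℝ) - 1) * r₀ ^ 2) ^ β) _ r :=
    h1.mul h2
  rw [hu', hD.deriv]
  have eP : (r ^ 2 - r₀ ^ 2) ^ (α - 1) = (r ^ 2 - r₀ ^ 2) ^ α / (r ^ 2 - r₀ ^ 2) := by
    rw [Real.rpow_sub hP, Real.rpow_one]
  have eQ : (r ^ 2 + ((d:ℝ) - 1) * r₀ ^ 2) ^ (β - 1)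
      = (r ^ 2 + ((d:ℝ) - 1) * r₀ ^ 2) ^ β / (r ^ 2 + ((d:ℝ) - 1) * r₀ ^ 2) := by
    rw [Real.rpow_sub hQ, Real.rpow_one]
  rw [eP, eQ]
  have hden : r ^ 4 - 2 * A * r ^ 2 - B
      = (r ^ 2 - r₀ ^ 2) * (r ^ 2 + ((d:ℝ) - 1) * r₀ ^ 2) := by
    rw [hAs]; nlinarith [hs4]
  have hkey : A * r - (d : ℝ) * ((m : ℝ) + 1 / 2) * r ^ 3
      = 2 * r * α * (r ^ 2 + ((d:ℝ) - 1) * r₀ ^ 2) + 2 * r * β * (r ^ 2 - r₀ ^ 2) := by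
    rw [hAs, hβ, hα]
    field_simp
    ring
  rw [hden, hkey]
  field_simp
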